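/- The function 𝔑 counting minimal atomic decompositions is supermodular on the partition lattice: for all partitions π, π' of a finite set X, 𝔑(π) + 𝔑(π') ≤ 𝔑(π ∧ π') + 𝔑(π ∨ π'). -/

import Mathlib

variable {X : Type*} [Fintype X] [DecidableEq X]

/-- The atom of the partition lattice whose only nonsingleton block is `{x, y}`. -/
def pairSetoid (x y : X) : Setoid X where
  r a b := a = b ∨ (a = x ∧ b = y) ∨ (a = y ∧ b = x)
  iseqv := by
    refine ⟨fun a => Or.inl rfl, ?_, ?_⟩
    · intro a b h; tauto
    · intro a b c h1 h2; aesop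

/-- `S` is an atomic decomposition of the partition `π`. -/
def IsAtomicDecomp (π : Setoid X) (S : Set (Setoid X)) : Prop :=
  (∀ a ∈ S, IsAtom a) ∧ sSup S = π

/-- `S` is a minimal atomic decomposition of `π`. -/
def IsMinAtomicDecomp (π : Setoid X) (S : Set (Setoid X)) : Prop :=
  IsAtomicDecomp π S ∧ ∀ T ⊂ S, ¬ IsAtomicDecomp π T

/-- `𝔑 π`: the number of minimal atomic decompositions of `π`. -/
noncomputable def numMinDecomp (π : Setoid X) : ℕ :=
  {S | IsMinAtomicDecomp π S}.ncard

/-- The graph on `X` whose edges are the nonsingleton blocks of the atoms in `S`. -/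
def atomGraph (S : Set (Setoid X)) : SimpleGraph X where
  Adj a b := a ≠ b ∧ pairSetoid a b ∈ S
  symm := by
    constructor
    intro a b ⟨h1, h2⟩
    refine ⟨h1.symm, ?_⟩
    have h : pairSetoid b a = pairSetoid a b := by
      apply Setoid.ext; intro u v
      show _ ∨ _ ↔ _ ∨ _; tauto
    rw [h]; exact h2
  loopless := by constructor; intro a ⟨h, _⟩; exact h rfl

instance : Finite (Setoid X) :=
  Finite.of_injective (fun s => ⇑s)
    (fun a b h => Setoid.ext fun x y => by simp only [funext_iff] at h; exact (h x y).to_iff)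

lemma pairSetoid_r (x y a b : X) :
    (pairSetoid x y).r a b ↔ a = b ∨ (a = x ∧ b = y) ∨ (a = y ∧ b = x) := Iff.rfl

lemma pairSetoid_le {x y : X} {σ : Setoid X} (h : σ.r x y) : pairSetoid x y ≤ σ := by
  intro a b hab
  rcases hab with rfl | ⟨rfl, rfl⟩ | ⟨rfl, rfl⟩
  · exact σ.refl' a
  · exact h
  · exact σ.symm' h

lemma le_iff_pair {x y : X} {σ : Setoid X} : pairSetoid x y ≤ σ ↔ σ.r x y :=
  ⟨fun h => h (Or.inr (Or.inl ⟨rfl, rfl⟩)), pairSetoid_le⟩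

lemma pairSetoid_ne_bot {x y : X} (h : x ≠ y) : pairSetoid x y ≠ ⊥ := by
  intro hb
  have : (pairSetoid x y).r x y := Or.inr (Or.inl ⟨rfl, rfl⟩)
  rw [hb] at this
  exact h this

lemma isAtom_pairSetoid {x y : X} (h : x ≠ y) : IsAtom (pairSetoid x y) := by
  constructor
  · exact pairSetoid_ne_bot h
  · intro σ hlt
    ext a b
    constructor
    · intro hab
      have h1 : (pairSetoid x y).r a b := hlt.le hab
      rcases h1 with rfl | ⟨rfl, rfl⟩ | ⟨rfl, rfl⟩
      · rfl
      · exact absurd (pairSetoid_le hab) (fun hle => hlt.ne (le_antisymm hlt.le hle))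
      · exact absurd (pairSetoid_le (σ.symm' hab)) (fun hle => hlt.ne (le_antisymm hlt.le hle))
    · rintro rfl; exact σ.refl' a

lemma isAtom_iff_pair {a : Setoid X} : IsAtom a ↔ ∃ x y, x ≠ y ∧ a = pairSetoid x y := by
  constructor
  · intro ha
    have hne : a ≠ ⊥ := ha.1
    have hex : ∃ x y, x ≠ y ∧ a.r x y := by
      by_contra hno
      push_neg at hno
      apply hne
      ext u v
      constructor
      · intro h
        show u = v
        by_contra huv
        exact hno u v huv h
      · rintro rfl; exact a.refl' u
    obtain ⟨x, y, hxy, hr⟩ := hex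
    refine ⟨x, y, hxy, ?_⟩
    have hle : pairSetoid x y ≤ a := pairSetoid_le hr
    rcases lt_or_eq_of_le hle with hlt | heq
    · exact absurd (ha.2 _ hlt) (pairSetoid_ne_bot hxy)
    · exact heq.symm
  · rintro ⟨x, y, hxy, rfl⟩; exact isAtom_pairSetoid hxy

set_option linter.unusedSectionVars false


/-- Explicit description of joining a setoid with a pair atom. -/
def supPair (τ : Setoid X) (x y : X) : Setoid X where
  r a b := τ.r a b ∨ (τ.r a x ∧ τ.r y b) ∨ (τ.r a y ∧ τ.r x b)
  iseqv := by
    refine ⟨fun a => Or.inl (τ.refl' a), ?_, ?_⟩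
    · rintro a b (h | ⟨h1, h2⟩ | ⟨h1, h2⟩)
      · exact Or.inl (τ.symm' h)
      · exact Or.inr (Or.inr ⟨τ.symm' h2, τ.symm' h1⟩)
      · exact Or.inr (Or.inl ⟨τ.symm' h2, τ.symm' h1⟩)
    · rintro a b c (h | ⟨h1, h2⟩ | ⟨h1, h2⟩) (g | ⟨g1, g2⟩ | ⟨g1, g2⟩)
      · exact Or.inl (τ.trans' h g)
      · exact Or.inr (Or.inl ⟨τ.trans' h g1, g2⟩)
      · exact Or.inr (Or.inr ⟨τ.trans' h g1, g2⟩)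
      · exact Or.inr (Or.inl ⟨h1, τ.trans' h2 g⟩)
      · exact Or.inl (τ.trans' (τ.trans' h1 (τ.symm' g1)) (τ.trans' (τ.symm' h2) g2))
      · exact Or.inl (τ.trans' h1 g2)
      · exact Or.inr (Or.inr ⟨h1, τ.trans' h2 g⟩)
      · exact Or.inl (τ.trans' h1 g2)
      · exact Or.inl (τ.trans' (τ.trans' h1 (τ.symm' g1)) (τ.trans' (τ.symm' h2) g2))

lemma sup_pair_eq (τ : Setoid X) (x y : X) : τ ⊔ pairSetoid x y = supPair τ x y := by
  apply le_antisymm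
  · apply sup_le
    · intro a b h; exact Or.inl h
    · rintro a b (rfl | ⟨rfl, rfl⟩ | ⟨rfl, rfl⟩)
      · exact Or.inl (τ.refl' a)
      · exact Or.inr (Or.inl ⟨τ.refl' _, τ.refl' _⟩)
      · exact Or.inr (Or.inr ⟨τ.refl' _, τ.refl' _⟩)
  · rintro a b (h | ⟨h1, h2⟩ | ⟨h1, h2⟩)
    · exact (le_sup_left : τ ≤ _) h
    · refine (τ ⊔ pairSetoid x y).trans' ((le_sup_left : τ ≤ _) h1) ?_
      refine (τ ⊔ pairSetoid x y).trans' ((le_sup_right : pairSetoid x y ≤ _)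
        (Or.inr (Or.inl ⟨rfl, rfl⟩))) ((le_sup_left : τ ≤ _) h2)
    · refine (τ ⊔ pairSetoid x y).trans' ((le_sup_left : τ ≤ _) h1) ?_
      refine (τ ⊔ pairSetoid x y).trans' ((le_sup_right : pairSetoid x y ≤ _)
        (Or.inr (Or.inr ⟨rfl, rfl⟩))) ((le_sup_left : τ ≤ _) h2)

lemma sup_pair_r {τ : Setoid X} {x y a b : X} :
    (τ ⊔ pairSetoid x y).r a b ↔ τ.r a b ∨ (τ.r a x ∧ τ.r y b) ∨ (τ.r a y ∧ τ.r x b) := by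
  rw [sup_pair_eq]; rfl

/-- number of classes -/
noncomputable def ncls (σ : Setoid X) : ℕ := Nat.card (Quotient σ)

lemma sup_pair_of_rel {τ : Setoid X} {x y : X} (h : τ.r x y) : τ ⊔ pairSetoid x y = τ :=
  le_antisymm (sup_le le_rfl (pairSetoid_le h)) le_sup_left

lemma ncls_sup_pair {τ : Setoid X} {x y : X} (h : ¬ τ.r x y) :
    ncls τ = ncls (τ ⊔ pairSetoid x y) + 1 := by
  classical
  set j := τ ⊔ pairSetoid x y with hj
  have hle : τ ≤ j := le_sup_left
  set p : Quotient τ := Quotient.mk _ y with hp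
  let F : {u : Quotient τ // u ≠ p} → Quotient j :=
    fun u => Quotient.map id (fun a b h' => hle h') u.1
  have hbij : Function.Bijective F := by
    constructor
    · rintro ⟨u, hu⟩ ⟨v, hv⟩ hFuv
      induction u using Quotient.ind
      induction v using Quotient.ind
      rename_i a b
      simp only [F, Quotient.map_mk, id] at hFuv
      have hab : j.r a b := Quotient.exact hFuv
      rcases (sup_pair_r.mp hab) with h1 | ⟨h1, h2⟩ | ⟨h1, h2⟩
      · exact Subtype.ext (Quotient.sound h1)
      · exact absurd (Quotient.sound (τ.symm' h2) : _ = p) hv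
      · exact absurd (Quotient.sound h1 : _ = p) hu
    · intro z
      induction z using Quotient.ind
      rename_i z
      by_cases hzy : τ.r z y
      · refine ⟨⟨Quotient.mk _ x, fun he => h (Quotient.exact he)⟩, ?_⟩
        simp only [F, Quotient.map_mk, id]
        exact Quotient.sound (sup_pair_r.mpr (Or.inr (Or.inl ⟨τ.refl' x, τ.symm' hzy⟩)))
      · exact ⟨⟨Quotient.mk _ z, fun he => hzy (Quotient.exact he)⟩,
          Quotient.sound (sup_pair_r.mpr (Or.inl (τ.refl' z)))⟩
  have h1 : Nat.card {u : Quotient τ // u ≠ p} = ncls j := Nat.card_eq_of_bijective F hbij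
  have h2 : Nat.card {u : Quotient τ // u ≠ p} + 1 = ncls τ := by
    have hset : {u : Quotient τ | u ≠ p} = Set.univ \ {p} := by ext u; simp
    show Nat.card ({u : Quotient τ | u ≠ p} : Set _) + 1 = ncls τ
    rw [Nat.card_coe_set_eq, hset, Set.ncard_diff_singleton_add_one (Set.mem_univ p)
      (Set.toFinite _)]
    · simp [ncls, Nat.card, Set.ncard_univ]
  omega

lemma ncls_sup_pair_le (τ : Setoid X) (x y : X) :
    ncls τ ≤ ncls (τ ⊔ pairSetoid x y) + 1 := by
  by_cases h : τ.r x y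
  · rw [sup_pair_of_rel h]; omega
  · exact (ncls_sup_pair h).le

lemma ncls_le_of_le {σ τ : Setoid X} (h : σ ≤ τ) : ncls τ ≤ ncls σ := by
  apply Nat.card_le_card_of_surjective (Quotient.map id (fun a b h' => h h'))
  intro z
  induction z using Quotient.ind
  rename_i z
  exact ⟨Quotient.mk _ z, rfl⟩

lemma exists_pair_of_lt {σ τ : Setoid X} (h : σ < τ) : ∃ x y, ¬ σ.r x y ∧ τ.r x y := by
  by_contra hno
  push_neg at hno
  exact h.ne (le_antisymm h.le (fun a b hab => by
    by_contra hs
    exact (hno a b hs) hab))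

lemma ncls_lt_of_lt {σ τ : Setoid X} (h : σ < τ) : ncls τ < ncls σ := by
  obtain ⟨x, y, hns, hr⟩ := exists_pair_of_lt h
  have hxy : x ≠ y := fun he => hns (he ▸ σ.refl' x)
  have h1 : ncls σ = ncls (σ ⊔ pairSetoid x y) + 1 := ncls_sup_pair hns
  have h2 : σ ⊔ pairSetoid x y ≤ τ := sup_le h.le (pairSetoid_le hr)
  have h3 : ncls τ ≤ ncls (σ ⊔ pairSetoid x y) := ncls_le_of_le h2
  omega

lemma eq_of_le_of_ncls_le {σ τ : Setoid X} (h : σ ≤ τ) (hc : ncls σ ≤ ncls τ) : σ = τ := by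
  rcases eq_or_lt_of_le h with he | hlt
  · exact he
  · exact absurd (ncls_lt_of_lt hlt) (by omega)

def AtomSet (S : Set (Setoid X)) : Prop := ∀ a ∈ S, IsAtom a
def Indep (S : Set (Setoid X)) : Prop := ∀ a ∈ S, ¬ a ≤ sSup (S \ {a})

lemma IsAtomicDecompDef (π : Setoid X) (S : Set (Setoid X)) :
    IsAtomicDecomp π S ↔ AtomSet S ∧ sSup S = π := Iff.rfl

lemma bot_rel {a b : X} (h : (⊥ : Setoid X).r a b) : a = b := by
  have h2 := congrFun (congrFun (Setoid.bot_def (α := X)) a) b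
  exact h2 ▸ h

lemma ncls_bot : ncls (⊥ : Setoid X) = Fintype.card X := by
  rw [ncls, ← Nat.card_eq_fintype_card]
  symm
  apply Nat.card_eq_of_bijective (Quotient.mk _)
  exact ⟨fun a b h => bot_rel (Quotient.exact h), fun z => Quotient.exists_rep z⟩

lemma Indep.subset {S T : Set (Setoid X)} (h : Indep S) (hTS : T ⊆ S) : Indep T := by
  intro a ha hle
  exact h a (hTS ha) (le_trans hle (sSup_le_sSup (Set.diff_subset_diff_left hTS)))

lemma ncls_le_sup_sSup {B : Set (Setoid X)} (hB : B.Finite) (hatom : AtomSet B) (τ : Setoid X) :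
    ncls τ ≤ ncls (τ ⊔ sSup B) + B.ncard := by
  refine Set.Finite.induction_on (motive := fun B _ => AtomSet B → ∀ τ, ncls τ ≤ ncls (τ ⊔ sSup B) + B.ncard)
    B hB ?_ ?_ hatom τ
  · intro _ τ; simp
  · clear hatom τ
    intro a B' haB' hB' IH hatom τ
    have IH := IH (fun b hb => hatom b (Set.mem_insert_of_mem _ hb))
    obtain ⟨x, y, hxy, rfl⟩ := isAtom_iff_pair.mp (hatom a (Set.mem_insert _ _))
    have h1 : ncls τ ≤ ncls (τ ⊔ pairSetoid x y) + 1 := ncls_sup_pair_le τ x y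
    have h2 := IH (τ ⊔ pairSetoid x y)
    have h3 : sSup (insert (pairSetoid x y) B') = pairSetoid x y ⊔ sSup B' := sSup_insert
    have h4 : τ ⊔ (pairSetoid x y ⊔ sSup B') = (τ ⊔ pairSetoid x y) ⊔ sSup B' := by
      rw [sup_assoc]
    rw [h3, h4, Set.ncard_insert_of_notMem haB' hB']
    omega

lemma card_le_of_atomSet {S : Set (Setoid X)} (hatom : AtomSet S) :
    Fintype.card X ≤ S.ncard + ncls (sSup S) := by
  have := ncls_le_sup_sSup (Set.toFinite S) hatom ⊥
  rw [bot_sup_eq, ncls_bot] at this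
  omega

lemma indep_card {S : Set (Setoid X)} (hatom : AtomSet S) (hind : Indep S) :
    S.ncard + ncls (sSup S) = Fintype.card X := by
  refine Set.Finite.induction_on
    (motive := fun S _ => AtomSet S → Indep S → S.ncard + ncls (sSup S) = Fintype.card X)
    S (Set.toFinite S) ?_ ?_ hatom hind
  · intro _ _; simp [ncls_bot]
  · clear hatom hind
    intro a S' haS' hS' IH hatom hind
    have hatom' : AtomSet S' := fun b hb => hatom b (Set.mem_insert_of_mem _ hb)
    have hind' : Indep S' := hind.subset (Set.subset_insert _ _)
    have IH := IH hatom' hind' 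
    have hdiff : insert a S' \ {a} = S' := by
      exact Set.insert_sdiff_self_of_notMem haS' 
    have hnle : ¬ a ≤ sSup S' := by
      have := hind a (Set.mem_insert _ _)
      rwa [hdiff] at this
    obtain ⟨x, y, hxy, rfl⟩ := isAtom_iff_pair.mp (hatom a (Set.mem_insert _ _))
    have hnr : ¬ (sSup S').r x y := fun hr => hnle (pairSetoid_le hr)
    have h1 : ncls (sSup S') = ncls (sSup S' ⊔ pairSetoid x y) + 1 := ncls_sup_pair hnr
    have h2 : sSup (insert (pairSetoid x y) S') = sSup S' ⊔ pairSetoid x y := by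
      rw [sSup_insert, sup_comm]
    rw [h2, Set.ncard_insert_of_notMem haS' hS']
    omega

lemma indep_of_card {S : Set (Setoid X)} (hatom : AtomSet S)
    (hcard : S.ncard + ncls (sSup S) = Fintype.card X) : Indep S := by
  intro a ha hle
  have hsup : sSup (S \ {a}) = sSup S := by
    apply le_antisymm (sSup_le_sSup Set.diff_subset)
    have : sSup S = sSup (insert a (S \ {a})) := by rw [Set.insert_diff_singleton,
      Set.insert_eq_of_mem ha]
    rw [this, sSup_insert]
    exact sup_le hle le_rfl
  have h1 : Fintype.card X ≤ (S \ {a}).ncard + ncls (sSup (S \ {a})) :=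
    card_le_of_atomSet (fun b hb => hatom b hb.1)
  have h2 : (S \ {a}).ncard + 1 = S.ncard := Set.ncard_diff_singleton_add_one ha (Set.toFinite S)
  rw [hsup] at h1
  omega

lemma minDecomp_iff {π : Setoid X} {S : Set (Setoid X)} :
    IsMinAtomicDecomp π S ↔ AtomSet S ∧ sSup S = π ∧ S.ncard + ncls π = Fintype.card X := by
  constructor
  · rintro ⟨⟨hatom, hsup⟩, hmin⟩
    refine ⟨hatom, hsup, ?_⟩
    rw [← hsup]
    apply indep_card hatom
    intro a ha hle
    apply hmin (S \ {a}) (Set.sdiff_singleton_ssubset.mpr ha)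
    refine ⟨fun b hb => hatom b hb.1, ?_⟩
    rw [← hsup]
    apply le_antisymm (sSup_le_sSup Set.diff_subset)
    have : sSup S = sSup (insert a (S \ {a})) := by rw [Set.insert_diff_singleton,
      Set.insert_eq_of_mem ha]
    rw [this, sSup_insert]
    exact sup_le hle le_rfl
  · rintro ⟨hatom, hsup, hcard⟩
    refine ⟨⟨hatom, hsup⟩, ?_⟩
    rintro T hT ⟨hatomT, hsupT⟩
    have h1 : Fintype.card X ≤ T.ncard + ncls π := by
      have := card_le_of_atomSet hatomT; rwa [hsupT] at this
    have h2 : T.ncard < S.ncard := Set.ncard_lt_ncard hT (Set.toFinite S)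
    omega

lemma exists_extension_aux (n : ℕ) {σ τ : Setoid X} (hn : ncls σ ≤ n) (h : σ ≤ τ) :
    ∃ A : Set (Setoid X), AtomSet A ∧ (∀ a ∈ A, ¬ a ≤ σ) ∧ σ ⊔ sSup A = τ ∧
      A.ncard + ncls τ = ncls σ := by
  induction n generalizing σ with
  | zero =>
    rcases eq_or_lt_of_le h with rfl | hlt
    · exact ⟨∅, by simp [AtomSet], by simp, by simp, by simp⟩
    · exact absurd (ncls_lt_of_lt hlt) (by omega)
  | succ n IH =>
    rcases eq_or_lt_of_le h with rfl | hlt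
    · exact ⟨∅, by simp [AtomSet], by simp, by simp, by simp⟩
    · obtain ⟨x, y, hns, hr⟩ := exists_pair_of_lt hlt
      have hxy : x ≠ y := fun he => hns (he ▸ σ.refl' x)
      set p := pairSetoid x y with hp
      have h1 : ncls σ = ncls (σ ⊔ p) + 1 := ncls_sup_pair hns
      have h2 : σ ⊔ p ≤ τ := sup_le h (pairSetoid_le hr)
      obtain ⟨A', hatom', hnle', hsup', hcard'⟩ := IH (by omega) h2
      have hpA' : p ∉ A' := fun hmem => hnle' p hmem le_sup_right
      refine ⟨insert p A', ?_, ?_, ?_, ?_⟩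
      · rintro a (rfl | ha)
        · exact isAtom_pairSetoid hxy
        · exact hatom' a ha
      · rintro a (rfl | ha)
        · rw [le_iff_pair]; exact hns
        · exact fun hle => hnle' a ha (le_trans hle le_sup_left)
      · rw [sSup_insert, ← sup_assoc]
        exact hsup'
      · rw [Set.ncard_insert_of_notMem hpA' (Set.toFinite _)]
        omega

lemma exists_extension {σ τ : Setoid X} (h : σ ≤ τ) :
    ∃ A : Set (Setoid X), AtomSet A ∧ (∀ a ∈ A, ¬ a ≤ σ) ∧ σ ⊔ sSup A = τ ∧
      A.ncard + ncls τ = ncls σ :=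
  exists_extension_aux (ncls σ) le_rfl h

/-- submodularity of the number of classes (reversed: ncls is "supermodular") -/
lemma ncls_submod (π π' : Setoid X) : ncls π + ncls π' ≤ ncls (π ⊓ π') + ncls (π ⊔ π') := by
  obtain ⟨B, hatomB, _, hsupB, hcardB⟩ := exists_extension (inf_le_right : π ⊓ π' ≤ π')
  have hj : π ⊔ π' = π ⊔ sSup B := by
    rw [← hsupB, ← sup_assoc, sup_inf_self]
  have h1 : ncls π ≤ ncls (π ⊔ sSup B) + B.ncard := ncls_le_sup_sSup (Set.toFinite B) hatomB π
  rw [← hj] at h1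
  omega

lemma mem_le_sSup {S : Set (Setoid X)} {s : Setoid X} (h : s ∈ S) : s ≤ sSup S := le_sSup h

def MDset (σ : Setoid X) : Set (Set (Setoid X)) := {S | IsMinAtomicDecomp σ S}

lemma numMinDecomp_eq (σ : Setoid X) : numMinDecomp σ = (MDset σ).ncard := rfl

lemma mem_MDset {σ : Setoid X} {S : Set (Setoid X)} : S ∈ MDset σ ↔ IsMinAtomicDecomp σ S :=
  Iff.rfl

theorem numMinDecomp_supermodular' (π π' : Setoid X) :
    numMinDecomp π + numMinDecomp π' ≤ numMinDecomp (π ⊓ π') + numMinDecomp (π ⊔ π') := by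
  obtain ⟨A, hatomA, hnleA, hsupA, hcardA⟩ := exists_extension (le_sup_left : π ≤ π ⊔ π')
  obtain ⟨A', hatomA', hnleA', hsupA', hcardA'⟩ := exists_extension (le_sup_right : π' ≤ π ⊔ π')
  have hdisj : ∀ {S : Set (Setoid X)}, sSup S = π → Disjoint S A := by
    intro S hS
    rw [Set.disjoint_left]
    intro s hs hsA
    exact hnleA s hsA (hS ▸ mem_le_sSup hs)
  have hdisj' : ∀ {S : Set (Setoid X)}, sSup S = π' → Disjoint S A' := by
    intro S hS
    rw [Set.disjoint_left]
    intro s hs hsA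
    exact hnleA' s hsA (hS ▸ mem_le_sSup hs)
  have hmem1 : ∀ S ∈ MDset π, S ∪ A ∈ MDset (π ⊔ π') := by
    rintro S hS
    obtain ⟨hatomS, hsupS, hcardS⟩ := minDecomp_iff.mp (mem_MDset.mp hS)
    refine mem_MDset.mpr (minDecomp_iff.mpr ⟨?_, ?_, ?_⟩)
    · rintro a (ha | ha); exacts [hatomS a ha, hatomA a ha]
    · rw [sSup_union, hsupS, hsupA]
    · rw [Set.ncard_union_eq (hdisj hsupS) (Set.toFinite _) (Set.toFinite _)]
      omega
  have hmem2 : ∀ S ∈ MDset π', S ∪ A' ∈ MDset (π ⊔ π') := by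
    rintro S hS
    obtain ⟨hatomS, hsupS, hcardS⟩ := minDecomp_iff.mp (mem_MDset.mp hS)
    refine mem_MDset.mpr (minDecomp_iff.mpr ⟨?_, ?_, ?_⟩)
    · rintro a (ha | ha); exacts [hatomS a ha, hatomA' a ha]
    · rw [sSup_union, hsupS, hsupA']
    · rw [Set.ncard_union_eq (hdisj' hsupS) (Set.toFinite _) (Set.toFinite _)]
      omega
  have hinj1 : Set.InjOn (fun S => S ∪ A) (MDset π) := by
    intro S hS T hT he
    replace he : S ∪ A = T ∪ A := he
    have h1 : sSup S = π := (minDecomp_iff.mp hS).2.1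
    have h2 : sSup T = π := (minDecomp_iff.mp hT).2.1
    have := congrArg (fun U => U \ A) he
    simpa [Set.union_diff_cancel_right (Set.disjoint_iff.mp (hdisj h1)),
      Set.union_diff_cancel_right (Set.disjoint_iff.mp (hdisj h2))] using this
  have hinj2 : Set.InjOn (fun S => S ∪ A') (MDset π') := by
    intro S hS T hT he
    replace he : S ∪ A' = T ∪ A' := he
    have h1 : sSup S = π' := (minDecomp_iff.mp hS).2.1
    have h2 : sSup T = π' := (minDecomp_iff.mp hT).2.1
    have := congrArg (fun U => U \ A') he
    simpa [Set.union_diff_cancel_right (Set.disjoint_iff.mp (hdisj' h1)),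
      Set.union_diff_cancel_right (Set.disjoint_iff.mp (hdisj' h2))] using this
  set I1 := (fun S => S ∪ A) '' (MDset π) with hI1
  set I2 := (fun S => S ∪ A') '' (MDset π') with hI2
  have hmeet : ∀ T ∈ I1 ∩ I2, T \ (A ∪ A') ∈ MDset (π ⊓ π') := by
    rintro T ⟨⟨S, hS, rfl⟩, ⟨S', hS', hTe⟩⟩
    replace hTe : S' ∪ A' = S ∪ A := hTe
    show (S ∪ A) \ (A ∪ A') ∈ MDset (π ⊓ π')
    obtain ⟨hatomS, hsupS, hcardS⟩ := minDecomp_iff.mp hS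
    obtain ⟨hatomS', hsupS', hcardS'⟩ := minDecomp_iff.mp hS'
    obtain ⟨hatomT, hsupT, hcardT⟩ := minDecomp_iff.mp (mem_MDset.mp (hmem1 S hS))
    have hindT : Indep (S ∪ A) := indep_of_card hatomT (by rw [hsupT]; exact hcardT)
    have hR : (S ∪ A) \ (A ∪ A') = S ∩ S' := by
      ext t
      constructor
      · rintro ⟨ht, htn⟩
        simp only [Set.mem_union, not_or] at htn
        constructor
        · rcases ht with h | h; exacts [h, absurd h htn.1]
        · have ht' : t ∈ S' ∪ A' := by rw [hTe]; exact ht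
          rcases ht' with h | h; exacts [h, absurd h htn.2]
      · rintro ⟨h1, h2⟩
        refine ⟨Or.inl h1, ?_⟩
        rintro (h | h)
        · exact hnleA t h (hsupS ▸ mem_le_sSup h1)
        · exact hnleA' t h (hsupS' ▸ mem_le_sSup h2)
    rw [hR]
    have hST : S ∪ S' ⊆ S ∪ A := by
      apply Set.union_subset Set.subset_union_left
      intro s hs
      rw [← hTe]; exact Or.inl hs
    have hU : (S ∪ S').ncard + ncls (π ⊔ π') = Fintype.card X := by
      have hind : Indep (S ∪ S') := hindT.subset hST
      have hsupU : sSup (S ∪ S') = π ⊔ π' := by rw [sSup_union, hsupS, hsupS']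
      have := indep_card (fun a ha => hatomT (by exact a) (hST ha)) hind
      rwa [hsupU] at this
    have hRind : Indep (S ∩ S') := hindT.subset (fun t ht => hST (Or.inl ht.1))
    have hRatom : AtomSet (S ∩ S') := fun a ha => hatomS a ha.1
    have hRcard : (S ∩ S').ncard + ncls (sSup (S ∩ S')) = Fintype.card X :=
      indep_card hRatom hRind
    have hie : (S ∩ S').ncard + (S ∪ S').ncard = S.ncard + S'.ncard :=
      Set.ncard_inter_add_ncard_union S S' (Set.toFinite _) (Set.toFinite _)
    have hsub := ncls_submod π π'
    have hle : sSup (S ∩ S') ≤ π ⊓ π' :=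
      sSup_le (fun s hs => le_inf (hsupS ▸ mem_le_sSup hs.1) (hsupS' ▸ mem_le_sSup hs.2))
    have hsupR : sSup (S ∩ S') = π ⊓ π' := eq_of_le_of_ncls_le hle (by omega)
    refine mem_MDset.mpr (minDecomp_iff.mpr ⟨hRatom, hsupR, ?_⟩)
    rw [← hsupR]
    omega
  have hinjm : Set.InjOn (fun T => T \ (A ∪ A')) (I1 ∩ I2) := by
    have hsubs : ∀ T ∈ I1 ∩ I2, A ∪ A' ⊆ T := by
      rintro T ⟨⟨S, hS, rfl⟩, ⟨S', hS', hTe⟩⟩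
      replace hTe : S' ∪ A' = S ∪ A := hTe
      show A ∪ A' ⊆ S ∪ A
      apply Set.union_subset Set.subset_union_right
      intro a ha
      rw [← hTe]; exact Or.inr ha
    rintro T1 hT1 T2 hT2 he
    replace he : T1 \ (A ∪ A') = T2 \ (A ∪ A') := he
    have e1 : T1 \ (A ∪ A') ∪ (A ∪ A') = T1 := Set.diff_union_of_subset (hsubs T1 hT1)
    have e2 : T2 \ (A ∪ A') ∪ (A ∪ A') = T2 := Set.diff_union_of_subset (hsubs T2 hT2)
    rw [← e1, ← e2, he]
  have c1 : I1.ncard = (MDset π).ncard := Set.ncard_image_of_injOn hinj1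
  have c2 : I2.ncard = (MDset π').ncard := Set.ncard_image_of_injOn hinj2
  have c3 : (I1 ∪ I2).ncard + (I1 ∩ I2).ncard = I1.ncard + I2.ncard :=
    Set.ncard_union_add_ncard_inter I1 I2 (Set.toFinite _) (Set.toFinite _)
  have c4 : (I1 ∪ I2).ncard ≤ (MDset (π ⊔ π')).ncard := by
    apply Set.ncard_le_ncard _ (Set.toFinite _)
    rintro T (⟨S, hS, rfl⟩ | ⟨S, hS, rfl⟩)
    exacts [hmem1 S hS, hmem2 S hS]
  have c5 : (I1 ∩ I2).ncard ≤ (MDset (π ⊓ π')).ncard := by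
    rw [← Set.ncard_image_of_injOn hinjm]
    apply Set.ncard_le_ncard _ (Set.toFinite _)
    rintro R ⟨T, hT, rfl⟩
    exact hmeet T hT
  rw [numMinDecomp_eq, numMinDecomp_eq, numMinDecomp_eq, numMinDecomp_eq]
  omega

/-- `𝔑` is supermodular on the partition lattice. -/
theorem numMinDecomp_supermodular (π π' : Setoid X) :
    numMinDecomp π + numMinDecomp π' ≤ numMinDecomp (π ⊓ π') + numMinDecomp (π ⊔ π') := by
  exact numMinDecomp_supermodular' π π'
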